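/- Let d₁², …, d_m² be positive reals and V a positive integer. For a multi-index j = (j₁,…,j_m) ∈ ℕ^m set ν(j) = π Σ_i d_i²(2 j_i + 1), with each value counted with multiplicity V times the number of multi-indices attaining it. Then this spectrum determines the multiset {d₁², …, d_m²} and the number V. -/

import Mathlib

open Real

/-- ν(j) = π Σ_i d_i² (2 j_i + 1), where `dsq i` denotes d_i². -/
noncomputable def nuVal {m : ℕ} (dsq : Fin m → ℝ) (j : Fin m → ℕ) : ℝ :=
  π * ∑ i, dsq i * (2 * (j i : ℝ) + 1)

/-- Auxiliary: the value without the factor π. -/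
noncomputable def Sval {n : ℕ} (d : Fin n → ℝ) (j : Fin n → ℕ) : ℝ :=
  ∑ i, d i * (2 * (j i : ℝ) + 1)

/-- Counting function. -/
noncomputable def cnt {n : ℕ} (d : Fin n → ℝ) (x : ℝ) : ℕ :=
  Nat.card {j : Fin n → ℕ // Sval d j = x}

lemma Sval_eq {n : ℕ} (d : Fin n → ℝ) (j : Fin n → ℕ) :
    Sval d j = (∑ i, d i) + ∑ i, 2 * d i * (j i : ℝ) := by
  simp only [Sval, ← Finset.sum_add_distrib]
  exact Finset.sum_congr rfl fun i _ => by ring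

lemma Sval_zero {n : ℕ} (d : Fin n → ℝ) : Sval d 0 = ∑ i, d i := by
  simp [Sval_eq]

lemma finite_sol {n : ℕ} {d : Fin n → ℝ} (hd : ∀ i, 0 < d i) (x : ℝ) :
    Finite {j : Fin n → ℕ // Sval d j = x} := by
  have hsub : {j : Fin n → ℕ | Sval d j = x} ⊆
      Set.pi Set.univ (fun i => Set.Iic (Nat.floor (x / (2 * d i)))) := by
    intro j hj i _
    simp only [Set.mem_Iic]
    apply Nat.le_floor
    have hterm : d i * (2 * (j i : ℝ) + 1) ≤ Sval d j :=
      Finset.single_le_sum (f := fun t => d t * (2 * (j t : ℝ) + 1))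
        (fun t _ => mul_nonneg (hd t).le (by positivity)) (Finset.mem_univ i)
    rw [hj] at hterm
    rw [le_div_iff₀ (by nlinarith [hd i])]
    nlinarith [hd i]
  exact Set.Finite.to_subtype
    (Set.Finite.subset (Set.Finite.pi fun i => Set.finite_Iic _) hsub)

lemma sval_ge {n : ℕ} {d : Fin n → ℝ} (hd : ∀ i, 0 < d i) (j : Fin n → ℕ) :
    (∑ i, d i) ≤ Sval d j := by
  rw [Sval_eq]
  have h : (0:ℝ) ≤ ∑ i, 2 * d i * (j i : ℝ) :=
    Finset.sum_nonneg fun i _ => mul_nonneg (mul_nonneg (by norm_num) (hd i).le)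
      (Nat.cast_nonneg _)
  linarith

lemma sval_ge' {n : ℕ} {d : Fin n → ℝ} (hd : ∀ i, 0 < d i) {k : Fin n → ℕ} {i : Fin n}
    (hk : 1 ≤ k i) : (∑ t, d t) + 2 * d i ≤ Sval d k := by
  rw [Sval_eq]
  have h1 : 2 * d i * 1 ≤ 2 * d i * (k i : ℝ) := by
    have : (1:ℝ) ≤ (k i : ℝ) := by exact_mod_cast hk
    nlinarith [hd i]
  have h2 : 2 * d i * (k i : ℝ) ≤ ∑ t, 2 * d t * (k t : ℝ) :=
    Finset.single_le_sum (f := fun t => 2 * d t * (k t : ℝ))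
      (fun t _ => mul_nonneg (mul_nonneg (by norm_num) (hd t).le) (Nat.cast_nonneg _))
      (Finset.mem_univ i)
  linarith

lemma cnt_ne_zero_iff {n : ℕ} {d : Fin n → ℝ} (hd : ∀ i, 0 < d i) (x : ℝ) :
    cnt d x ≠ 0 ↔ x ∈ Set.range (Sval d) := by
  have hf := finite_sol hd x
  rw [cnt, Nat.card_ne_zero]
  constructor
  · rintro ⟨⟨⟨j, hj⟩⟩, -⟩
    exact ⟨j, hj⟩
  · rintro ⟨j, hj⟩
    exact ⟨⟨⟨j, hj⟩⟩, hf⟩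

lemma cnt_sum {n : ℕ} {d : Fin n → ℝ} (hd : ∀ i, 0 < d i) :
    cnt d (∑ i, d i) = 1 := by
  rw [cnt, Nat.card_eq_one_iff_unique]
  have key : ∀ j : Fin n → ℕ, Sval d j = (∑ i, d i) → j = 0 := by
    intro j hj
    rw [Sval_eq] at hj
    have hz : ∑ i, 2 * d i * (j i : ℝ) = 0 := by linarith
    funext i
    have := (Finset.sum_eq_zero_iff_of_nonneg
      (fun t _ => mul_nonneg (mul_nonneg (by norm_num) (hd t).le) (Nat.cast_nonneg _) :
        ∀ t ∈ Finset.univ, (0:ℝ) ≤ 2 * d t * (j t : ℝ))).mp hz i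
      (Finset.mem_univ i)
    have hji : (j i : ℝ) = 0 := by
      have hdi := hd i
      by_contra hne
      have : (0:ℝ) < (j i : ℝ) := lt_of_le_of_ne (Nat.cast_nonneg _) (Ne.symm hne)
      nlinarith
    exact_mod_cast hji
  refine ⟨⟨fun a b => ?_⟩, ⟨⟨0, Sval_zero d⟩⟩⟩
  ext
  rw [key a.1 a.2, key b.1 b.2]

lemma Sval_succAbove {n : ℕ} (d : Fin (n+1) → ℝ) (i₀ : Fin (n+1)) (j : Fin (n+1) → ℕ) :
    Sval d j = d i₀ * (2 * (j i₀ : ℝ) + 1)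
      + Sval (d ∘ i₀.succAbove) (j ∘ i₀.succAbove) :=
  Fin.sum_univ_succAbove (fun i => d i * (2 * (j i : ℝ) + 1)) i₀

lemma Sval_update {n : ℕ} (d : Fin (n+1) → ℝ) (i₀ : Fin (n+1)) (j : Fin (n+1) → ℕ) (v : ℕ) :
    Sval d (Function.update j i₀ v)
      = Sval d j + d i₀ * (2 * (v : ℝ)) - d i₀ * (2 * (j i₀ : ℝ)) := by
  rw [Sval_succAbove d i₀ (Function.update j i₀ v), Sval_succAbove d i₀ j]
  have hc : Function.update j i₀ v ∘ i₀.succAbove = j ∘ i₀.succAbove :=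
    funext fun t => Function.update_of_ne (Fin.succAbove_ne i₀ t) _ _
  rw [hc, Function.update_self]
  ring

/-- The peeling recursion for the counting function. -/
lemma cnt_rec {n : ℕ} (d : Fin (n+1) → ℝ) (hd : ∀ i, 0 < d i) (i₀ : Fin (n+1)) (x : ℝ) :
    cnt d x = cnt (d ∘ i₀.succAbove) (x - d i₀) + cnt d (x - 2 * d i₀) := by
  classical
  have hde : ∀ i, 0 < (d ∘ i₀.succAbove) i := fun i => hd _
  have hfA := finite_sol hde (x - d i₀)
  have hfB := finite_sol hd (x - 2 * d i₀)
  -- equiv for the j i₀ = 0 part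
  have eqA : {j : Fin (n+1) → ℕ // Sval d j = x ∧ j i₀ = 0}
      ≃ {j' : Fin n → ℕ // Sval (d ∘ i₀.succAbove) j' = x - d i₀} :=
    { toFun := fun a => ⟨a.1 ∘ i₀.succAbove, by
        obtain ⟨h1, h2⟩ := a.2
        rw [Sval_succAbove d i₀] at h1
        rw [h2] at h1
        push_cast at h1
        linarith⟩
      invFun := fun b => ⟨i₀.insertNth 0 b.1, by
        have hcomp : (i₀.insertNth 0 b.1) ∘ i₀.succAbove = b.1 :=
          funext fun t => Fin.insertNth_apply_succAbove (α := fun _ => ℕ) i₀ 0 b.1 t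
        constructor
        · rw [Sval_succAbove d i₀, hcomp, b.2, Fin.insertNth_apply_same]
          push_cast
          ring
        · exact Fin.insertNth_apply_same (α := fun _ => ℕ) i₀ 0 b.1⟩
      left_inv := fun a => by
        apply Subtype.ext
        have h0 : a.1 i₀ = 0 := a.2.2
        show i₀.insertNth 0 (a.1 ∘ i₀.succAbove) = a.1
        funext t
        rcases eq_or_ne t i₀ with rfl | ht
        · rw [Fin.insertNth_apply_same, h0]
        · obtain ⟨s, hs⟩ := Fin.exists_succAbove_eq ht
          rw [← hs]
          exact Fin.insertNth_apply_succAbove (α := fun _ => ℕ) i₀ 0 _ s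
      right_inv := fun b => Subtype.ext
        (funext fun t => Fin.insertNth_apply_succAbove (α := fun _ => ℕ) i₀ 0 b.1 t) }
  -- equiv for the j i₀ ≠ 0 part
  have eqB : {j : Fin (n+1) → ℕ // Sval d j = x ∧ ¬ j i₀ = 0}
      ≃ {j : Fin (n+1) → ℕ // Sval d j = x - 2 * d i₀} :=
    { toFun := fun a => ⟨Function.update a.1 i₀ (a.1 i₀ - 1), by
        obtain ⟨h1, h2⟩ := a.2
        rw [Sval_update, h1]
        have h1le : 1 ≤ a.1 i₀ := Nat.one_le_iff_ne_zero.mpr h2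
        have hcast : ((a.1 i₀ - 1 : ℕ) : ℝ) = (a.1 i₀ : ℝ) - 1 := by
          push_cast [Nat.cast_sub h1le]; ring
        rw [hcast]
        ring⟩
      invFun := fun b => ⟨Function.update b.1 i₀ (b.1 i₀ + 1), by
        constructor
        · rw [Sval_update, b.2]
          push_cast
          ring
        · simp⟩
      left_inv := fun a => by
        apply Subtype.ext
        funext t
        by_cases ht : t = i₀
        · subst ht
          simp [Nat.sub_add_cancel (Nat.one_le_iff_ne_zero.mpr a.2.2)]
        · simp [Function.update_of_ne ht]
      right_inv := fun b => by
        apply Subtype.ext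
        funext t
        by_cases ht : t = i₀
        · subst ht; simp
        · simp [Function.update_of_ne ht] }
  calc cnt d x
      = Nat.card ({j : Fin n → ℕ // Sval (d ∘ i₀.succAbove) j = x - d i₀}
          ⊕ {j : Fin (n+1) → ℕ // Sval d j = x - 2 * d i₀}) := by
        apply Nat.card_congr
        exact ((Equiv.sumCompl (fun a : {j : Fin (n+1) → ℕ // Sval d j = x} =>
            a.1 i₀ = 0)).symm.trans
          (Equiv.sumCongr
            ((Equiv.subtypeSubtypeEquivSubtypeInter _ _).trans eqA)
            ((Equiv.subtypeSubtypeEquivSubtypeInter _ _).trans eqB)))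
    _ = cnt (d ∘ i₀.succAbove) (x - d i₀) + cnt d (x - 2 * d i₀) := Nat.card_sum

/-- Multiset identity when peeling off one coordinate. -/
lemma map_univ_succAbove {n : ℕ} (d : Fin (n+1) → ℝ) (i₀ : Fin (n+1)) :
    Multiset.map d Finset.univ.val
      = d i₀ ::ₘ Multiset.map (d ∘ i₀.succAbove) Finset.univ.val := by
  rw [Fin.univ_succAbove n i₀, Finset.cons_val, Multiset.map_cons, Finset.map_val,
    Multiset.map_map]
  rfl

/-- Key induction: equal counting functions imply equal multisets. -/
lemma key_multiset : ∀ n : ℕ, ∀ d d' : Fin n → ℝ, (∀ i, 0 < d i) → (∀ i, 0 < d' i) →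
    (∀ x, cnt d x = cnt d' x) →
    Multiset.map d Finset.univ.val = Multiset.map d' Finset.univ.val := by
  intro n
  induction n with
  | zero => intro d d' _ _ _; simp
  | succ n ih =>
    intro d d' hd hd' hcnt
    have hne : (Finset.univ : Finset (Fin (n+1))).Nonempty := Finset.univ_nonempty
    set μ : ℝ := Finset.univ.inf' hne d with hμdef
    set μ' : ℝ := Finset.univ.inf' hne d' with hμ'def
    obtain ⟨i₀, -, hi₀⟩ := Finset.exists_mem_eq_inf' hne d
    obtain ⟨i₀', -, hi₀'⟩ := Finset.exists_mem_eq_inf' hne d'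
    have hd₀ : d i₀ = μ := hi₀.symm
    have hd₀' : d' i₀' = μ' := hi₀'.symm
    have hμpos : 0 < μ := hd₀ ▸ hd i₀
    have hμ'pos : 0 < μ' := hd₀' ▸ hd' i₀'
    have hrange : Set.range (Sval d) = Set.range (Sval d') := by
      ext x
      rw [← cnt_ne_zero_iff hd, ← cnt_ne_zero_iff hd', hcnt x]
    -- sums are equal
    have hsum_le : ∀ (e e' : Fin (n+1) → ℝ), (∀ i, 0 < e' i) →
        Set.range (Sval e) = Set.range (Sval e') → (∑ i, e' i) ≤ ∑ i, e i := by
      intro e e' he' hr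
      have : (∑ i, e i) ∈ Set.range (Sval e') := hr ▸ ⟨0, Sval_zero e⟩
      obtain ⟨j, hj⟩ := this
      calc (∑ i, e' i) ≤ Sval e' j := sval_ge he' j
        _ = _ := hj
    have hsum : (∑ i, d i) = ∑ i, d' i :=
      le_antisymm (hsum_le d' d hd hrange.symm) (hsum_le d d' hd' hrange)
    -- minima are equal
    have hmin_le : ∀ (e e' : Fin (n+1) → ℝ) (he : ∀ i, 0 < e i) (he' : ∀ i, 0 < e' i),
        Set.range (Sval e) = Set.range (Sval e') → (∑ i, e i) = (∑ i, e' i) →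
        ∀ i₁, e i₁ = Finset.univ.inf' hne e →
        Finset.univ.inf' hne e' ≤ Finset.univ.inf' hne e := by
      intro e e' he he' hr hs i₁ hi₁
      classical
      set ν := Finset.univ.inf' hne e
      set ν' := Finset.univ.inf' hne e'
      have hν : 0 < ν := hi₁ ▸ he i₁
      -- the point with a single 1 in coordinate i₁
      have hval : Sval e (Pi.single i₁ 1) = (∑ i, e i) + 2 * ν := by
        rw [Sval_eq]
        congr 1
        rw [Finset.sum_eq_single i₁]
        · simp [hi₁]
        · intro b _ hb
          simp [Pi.single_eq_of_ne hb]
        · intro h; exact absurd (Finset.mem_univ i₁) h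
      have hmem : ((∑ i, e i) + 2 * ν) ∈ Set.range (Sval e') :=
        hr ▸ ⟨Pi.single i₁ 1, hval⟩
      obtain ⟨k, hk⟩ := hmem
      have hkne : ∃ i, 1 ≤ k i := by
        by_contra hcon
        push_neg at hcon
        have hk0 : k = 0 := funext fun i => Nat.lt_one_iff.mp (hcon i)
        rw [hk0, Sval_zero, ← hs] at hk
        linarith
      obtain ⟨i, hi⟩ := hkne
      have h1 : (∑ t, e' t) + 2 * e' i ≤ Sval e' k := sval_ge' he' hi
      have h2 : ν' ≤ e' i := Finset.inf'_le _ (Finset.mem_univ i)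
      rw [hk, ← hs] at h1
      linarith
    have hμeq : μ = μ' :=
      le_antisymm (hmin_le d' d hd' hd hrange.symm hsum.symm i₀' hd₀')
        (hmin_le d d' hd hd' hrange hsum i₀ hd₀)
    -- peel
    have hepos : ∀ i, 0 < (d ∘ i₀.succAbove) i := fun i => hd _
    have he'pos : ∀ i, 0 < (d' ∘ i₀'.succAbove) i := fun i => hd' _
    have hcnt_e : ∀ y, cnt (d ∘ i₀.succAbove) y = cnt (d' ∘ i₀'.succAbove) y := by
      intro y
      have h1 := cnt_rec d hd i₀ (y + μ)
      have h2 := cnt_rec d' hd' i₀' (y + μ)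
      rw [hd₀] at h1
      rw [hd₀', ← hμeq] at h2
      have e1 : y + μ - μ = y := by ring
      have e2 : y + μ - 2 * μ = y - μ := by ring
      rw [e1, e2] at h1 h2
      rw [hcnt (y + μ), hcnt (y - μ)] at h1
      omega
    have hmult := ih _ _ hepos he'pos hcnt_e
    rw [map_univ_succAbove d i₀, map_univ_succAbove d' i₀', hd₀, hd₀', ← hμeq, hmult]

/-- The spectrum {ν(j)}, each value counted with multiplicity V times the number of
multi-indices attaining it, determines the multiset {d_i²} and the number V. -/
theorem stmt16 {m : ℕ} (hm : 0 < m) (dsq dsq' : Fin m → ℝ)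
    (hd : ∀ i, 0 < dsq i) (hd' : ∀ i, 0 < dsq' i)
    (V V' : ℕ) (hV : 0 < V) (hV' : 0 < V')
    (hspec : ∀ x : ℝ,
      V * Nat.card {j : Fin m → ℕ // nuVal dsq j = x} =
        V' * Nat.card {j : Fin m → ℕ // nuVal dsq' j = x}) :
    V = V' ∧ ∃ σ : Equiv.Perm (Fin m), ∀ i, dsq' i = dsq (σ i) := by
  -- translate hspec into a statement about cnt
  have hcard : ∀ (f : Fin m → ℝ) (y : ℝ),
      Nat.card {j : Fin m → ℕ // nuVal f j = π * y} = cnt f y := by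
    intro f y
    apply Nat.card_congr
    apply Equiv.subtypeEquivRight
    intro j
    unfold nuVal Sval
    constructor
    · intro h; exact mul_left_cancel₀ pi_ne_zero h
    · intro h; rw [h]
  have hspec' : ∀ y : ℝ, V * cnt dsq y = V' * cnt dsq' y := by
    intro y
    have := hspec (π * y)
    rwa [hcard dsq y, hcard dsq' y] at this
  -- V = V'
  have h1 := hspec' (∑ i, dsq i)
  have h2 := hspec' (∑ i, dsq' i)
  rw [cnt_sum hd] at h1
  rw [cnt_sum hd'] at h2
  have hVV' : V = V' := by
    rcases Nat.eq_zero_or_pos (cnt dsq' (∑ i, dsq i)) with h | h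
    · rw [h] at h1; omega
    rcases Nat.eq_zero_or_pos (cnt dsq (∑ i, dsq' i)) with h' | h'
    · rw [h'] at h2; omega
    nlinarith
  refine ⟨hVV', ?_⟩
  -- equal counting functions
  have hcnt_eq : ∀ y, cnt dsq y = cnt dsq' y := by
    intro y
    have := hspec' y
    rw [hVV'] at this
    exact Nat.eq_of_mul_eq_mul_left hV' this
  have hmult := key_multiset m dsq dsq' hd hd' hcnt_eq
  -- convert multiset equality to a permutation
  have hlist : List.Perm (List.ofFn dsq) (List.ofFn dsq') := by
    rw [← Multiset.coe_eq_coe, ← Fin.univ_val_map, ← Fin.univ_val_map]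
    exact hmult
  set τ := Tuple.sort dsq
  set τ' := Tuple.sort dsq'
  have hmono : Monotone (dsq ∘ τ) := Tuple.monotone_sort dsq
  have hmono' : Monotone (dsq' ∘ τ') := Tuple.monotone_sort dsq'
  have hperm : List.Perm (List.ofFn (dsq ∘ τ)) (List.ofFn (dsq' ∘ τ')) :=
    ((τ.ofFn_comp_perm dsq).trans hlist).trans (τ'.ofFn_comp_perm dsq').symm
  have heq : List.ofFn (dsq ∘ τ) = List.ofFn (dsq' ∘ τ') :=
    List.Perm.eq_of_sortedLE hmono.sortedLE_ofFn hmono'.sortedLE_ofFn hperm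
  have hfun : dsq ∘ τ = dsq' ∘ τ' := List.ofFn_injective heq
  refine ⟨τ'.symm.trans τ, fun i => ?_⟩
  have := congrFun hfun (τ'.symm i)
  simp only [Function.comp_apply] at this
  rw [Equiv.trans_apply, this, Equiv.apply_symm_apply]
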